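/- Let G be a 2-unbalanced, 3-edge-connected signed graph on at least two vertices, let v be a vertex of degree at least 4, and let e be an edge incident to v. Then there is at most one edge f ≠ e incident to v such that the signed graph obtained from G by uncontracting at v with {e,f} is not 2-unbalanced. -/

import Mathlib

/-- A signed multigraph; `sign e = true` means positive, `false` negative. -/
structure SignedMultigraph (V E : Type*) where
  fst : E → V
  snd : E → V
  sign : E → Bool

namespace SignedMultigraph

variable {V E : Type*}

/-- The signature obtained from `G.sign` by switching at the vertex set `S`:
the sign of an edge is negated iff exactly one of its endpoints lies in `S`. -/
def switchSign [DecidableEq V] (G : SignedMultigraph V E) (S : Finset V) (e : E) : Bool :=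
  if (G.fst e ∈ S) ↔ (G.snd e ∈ S) then G.sign e else !G.sign e

/-- `G` is `k`-unbalanced: every signature equivalent to `G.sign` under
switching has at least `k` negative edges. -/
def IsKUnbalanced [DecidableEq V] [Fintype E] (G : SignedMultigraph V E) (k : ℕ) : Prop :=
  ∀ S : Finset V, k ≤ (Finset.univ.filter fun e => G.switchSign S e = false).card

/-- The edge cut `δ(X)`: edges with exactly one endpoint in `X`. -/
def edgeCut [DecidableEq V] [Fintype E] (G : SignedMultigraph V E) (X : Finset V) :
    Finset E :=
  Finset.univ.filter fun e => ¬ ((G.fst e ∈ X) ↔ (G.snd e ∈ X))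

/-- `G` is 3-edge-connected: every nonempty proper vertex set has at least 3
edges in its cut. -/
def ThreeEdgeConnected [DecidableEq V] [Fintype V] [Fintype E]
    (G : SignedMultigraph V E) : Prop :=
  ∀ X : Finset V, X.Nonempty → X ≠ Finset.univ → 3 ≤ (G.edgeCut X).card

/-- The degree of a vertex (loops counted twice). -/
def degree [DecidableEq V] [Fintype E] (G : SignedMultigraph V E) (v : V) : ℕ :=
  ∑ e, ((if G.fst e = v then 1 else 0) + (if G.snd e = v then 1 else 0))

/-- `e` is incident to `v`. -/
def Incident (G : SignedMultigraph V E) (e : E) (v : V) : Prop :=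
  G.fst e = v ∨ G.snd e = v

/-- Uncontracting at `v` with `{e, f}`: add a new vertex `v'` (here `none`),
reattach the `v`-endpoint of each of `e` and `f` at `v'`, and add a new
positive edge `v v'` (here the edge `none`). -/
def uncontractAt [DecidableEq V] [DecidableEq E] (G : SignedMultigraph V E)
    (v : V) (e f : E) : SignedMultigraph (Option V) (Option E) where
  fst := fun g => match g with
    | none => some v
    | some g => if (g = e ∨ g = f) ∧ G.fst g = v then none else some (G.fst g)
  snd := fun g => match g with
    | none => none
    | some g => if (g = e ∨ g = f) ∧ G.fst g ≠ v ∧ G.snd g = v then none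
                else some (G.snd g)
  sign := fun g => match g with
    | none => true
    | some g => G.sign g

end SignedMultigraph

open SignedMultigraph

set_option linter.unusedSectionVars false
set_option linter.unreachableTactic false
set_option linter.unusedTactic false

section Aux

variable {V E : Type*} [Fintype V] [Fintype E] [DecidableEq V] [DecidableEq E]

lemma switchSign_uncontract_some (G : SignedMultigraph V E) (v : V) (e f : E)
    (he : G.Incident e v) (hf : G.Incident f v) (S' : Finset (Option V)) (g : E) :
    (G.uncontractAt v e f).switchSign S' (some g) =
      if (g = e ∨ g = f) ∧ ¬ ((none : Option V) ∈ S' ↔ some v ∈ S')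
      then !(G.switchSign (Finset.univ.filter fun y => some y ∈ S') g)
      else G.switchSign (Finset.univ.filter fun y => some y ∈ S') g := by
  by_cases hg : g = e ∨ g = f
  · have hinc : G.Incident g v := by rcases hg with h|h <;> subst h <;> assumption
    by_cases hfst : G.fst g = v
    · simp only [switchSign, uncontractAt, hg, hfst, Finset.mem_filter, Finset.mem_univ,
        true_and, and_true, if_true, ne_eq, not_true, false_and, and_false, if_false]
      by_cases h1 : (none : Option V) ∈ S' <;> by_cases h2 : some v ∈ S' <;>
        by_cases h3 : some (G.snd g) ∈ S' <;>
        simp_all [hfst] <;> tauto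
    · have hsnd : G.snd g = v := by rcases hinc with h|h; exact absurd h hfst; exact h
      simp only [switchSign, uncontractAt, hg, hfst, hsnd, Finset.mem_filter, Finset.mem_univ,
        true_and, and_true, if_true, ne_eq, not_false_iff, if_false, and_false, false_and]
      by_cases h1 : (none : Option V) ∈ S' <;> by_cases h2 : some v ∈ S' <;>
        by_cases h3 : some (G.fst g) ∈ S' <;>
        simp_all [hsnd] <;> tauto
  · simp only [switchSign, uncontractAt, hg, false_and, if_false, Finset.mem_filter,
      Finset.mem_univ, true_and]

lemma switchSign_uncontract_none (G : SignedMultigraph V E) (v : V) (e f : E)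
    (S' : Finset (Option V)) :
    (G.uncontractAt v e f).switchSign S' none =
      if (some v ∈ S' ↔ (none : Option V) ∈ S') then true else false := by
  simp [switchSign, uncontractAt]

lemma exists_exact_pair (G : SignedMultigraph V E) (hunbal : G.IsKUnbalanced 2)
    (v : V) (e f : E) (he : G.Incident e v) (hf : G.Incident f v) (hef : f ≠ e)
    (hbad : ¬ (G.uncontractAt v e f).IsKUnbalanced 2) :
    ∃ S : Finset V,
      (Finset.univ.filter fun g => G.switchSign S g = false) = {e, f} := by
  rw [IsKUnbalanced, not_forall] at hbad
  obtain ⟨S', hS'⟩ := hbad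
  push_neg at hS'
  set S : Finset V := Finset.univ.filter (fun y => some y ∈ S') with hSdef
  by_cases hcase : (none : Option V) ∈ S' ↔ some v ∈ S'
  · exfalso
    have hG := hunbal S
    have hle : (Finset.univ.filter fun g => G.switchSign S g = false).card ≤
        (Finset.univ.filter fun g => (G.uncontractAt v e f).switchSign S' g = false).card := by
      apply Finset.card_le_card_of_injOn some
      · intro g hg
        simp only [Finset.mem_coe, Finset.mem_filter, Finset.mem_univ, true_and] at hg ⊢
        rw [switchSign_uncontract_some G v e f he hf S' g]
        simp [hcase, ← hSdef, hg]
      · intro a _ b _ h; exact Option.some_injective _ h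
    omega
  · have hnone : (G.uncontractAt v e f).switchSign S' none = false := by
      rw [switchSign_uncontract_none]
      simp only [ite_eq_right_iff]
      intro h; exact absurd h.symm hcase
    have hall : ∀ g : E, (G.uncontractAt v e f).switchSign S' (some g) = true := by
      intro g
      by_contra hgneg
      rw [Bool.not_eq_true] at hgneg
      have hsub : ({none, some g} : Finset (Option E)) ⊆
          Finset.univ.filter (fun x => (G.uncontractAt v e f).switchSign S' x = false) := by
        intro x hx
        simp only [Finset.mem_insert, Finset.mem_singleton] at hx
        rcases hx with rfl|rfl <;> simp [hnone, hgneg]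
      have h2 := Finset.card_le_card hsub
      rw [Finset.card_pair (by simp)] at h2
      omega
    refine ⟨S, ?_⟩
    ext g
    simp only [Finset.mem_filter, Finset.mem_univ, true_and, Finset.mem_insert,
      Finset.mem_singleton]
    have hmaster := switchSign_uncontract_some G v e f he hf S' g
    rw [hall g] at hmaster
    by_cases hg : g = e ∨ g = f
    · simp only [hg, hcase, not_false_iff, and_true, if_true] at hmaster
      constructor
      · intro _; exact hg
      · intro _; simpa using hmaster.symm
    · simp only [hg, false_and, if_false] at hmaster
      constructor
      · intro h; rw [← hmaster] at h; simp at h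
      · intro h; exact absurd h hg

lemma switchSign_ne_iff (G : SignedMultigraph V E) (S₁ S₂ : Finset V) (g : E) :
    G.switchSign S₁ g ≠ G.switchSign S₂ g ↔ g ∈ G.edgeCut (symmDiff S₁ S₂) := by
  by_cases hs : G.sign g <;>
    simp only [switchSign, edgeCut, Finset.mem_filter, Finset.mem_univ, true_and,
      Finset.mem_symmDiff, hs] <;>
  · by_cases h1 : G.fst g ∈ S₁ <;> by_cases h2 : G.snd g ∈ S₁ <;>
      by_cases h3 : G.fst g ∈ S₂ <;> by_cases h4 : G.snd g ∈ S₂ <;>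
      simp_all <;> tauto

end Aux


/-- let `G` be a 2-unbalanced, 3-edge-connected signed graph on at
least two vertices, `v` a vertex of degree at least 4, and `e` an edge incident
to `v`.  Then there is at most one edge `f ≠ e` incident to `v` such that
uncontracting at `v` with `{e, f}` yields a graph that is not 2-unbalanced. -/
theorem at_most_one_bad_uncontraction {V E : Type*} [Fintype V] [Fintype E]
    [DecidableEq V] [DecidableEq E] (G : SignedMultigraph V E)
    (hV : 2 ≤ Fintype.card V)
    (h3ec : G.ThreeEdgeConnected) (hunbal : G.IsKUnbalanced 2)
    (v : V) (hdeg : 4 ≤ G.degree v) (e : E) (he : G.Incident e v) :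
    ∀ f₁ f₂ : E, f₁ ≠ e → f₂ ≠ e → G.Incident f₁ v → G.Incident f₂ v →
      ¬ (G.uncontractAt v e f₁).IsKUnbalanced 2 →
      ¬ (G.uncontractAt v e f₂).IsKUnbalanced 2 →
      f₁ = f₂ := by
  intro f₁ f₂ hf₁e hf₂e hif₁ hif₂ hbad₁ hbad₂
  by_contra hne
  obtain ⟨S₁, hS₁⟩ := exists_exact_pair G hunbal v e f₁ he hif₁ hf₁e hbad₁
  obtain ⟨S₂, hS₂⟩ := exists_exact_pair G hunbal v e f₂ he hif₂ hf₂e hbad₂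
  have hsign₁ : ∀ g : E, G.switchSign S₁ g = false ↔ (g = e ∨ g = f₁) := by
    intro g
    have := Finset.ext_iff.mp hS₁ g
    simpa using this
  have hsign₂ : ∀ g : E, G.switchSign S₂ g = false ↔ (g = e ∨ g = f₂) := by
    intro g
    have := Finset.ext_iff.mp hS₂ g
    simpa using this
  have hcut : G.edgeCut (symmDiff S₁ S₂) = {f₁, f₂} := by
    ext g
    rw [← switchSign_ne_iff]
    simp only [Finset.mem_insert, Finset.mem_singleton]
    constructor
    · intro h
      by_contra hg
      push_neg at hg
      obtain ⟨hg1, hg2⟩ := hg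
      by_cases hge : g = e
      · subst hge
        have h1 : G.switchSign S₁ g = false := (hsign₁ g).mpr (Or.inl rfl)
        have h2 : G.switchSign S₂ g = false := (hsign₂ g).mpr (Or.inl rfl)
        rw [h1, h2] at h; exact h rfl
      · have h1 : G.switchSign S₁ g = true := by
          rcases Bool.eq_false_or_eq_true (G.switchSign S₁ g) with hh|hh
          · exact hh
          · rcases (hsign₁ g).mp hh with h|h; exact absurd h hge; exact absurd h hg1
        have h2 : G.switchSign S₂ g = true := by
          rcases Bool.eq_false_or_eq_true (G.switchSign S₂ g) with hh|hh
          · exact hh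
          · rcases (hsign₂ g).mp hh with h|h; exact absurd h hge; exact absurd h hg2
        rw [h1, h2] at h; exact h rfl
    · intro h
      rcases h with rfl|rfl
      · have h1 : G.switchSign S₁ g = false := (hsign₁ g).mpr (Or.inr rfl)
        have h2 : G.switchSign S₂ g = true := by
          rcases Bool.eq_false_or_eq_true (G.switchSign S₂ g) with hh|hh
          · exact hh
          · rcases (hsign₂ g).mp hh with h|h
            · exact absurd h hf₁e
            · exact absurd h hne
        rw [h1, h2]; simp
      · have h2 : G.switchSign S₂ g = false := (hsign₂ g).mpr (Or.inr rfl)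
        have h1 : G.switchSign S₁ g = true := by
          rcases Bool.eq_false_or_eq_true (G.switchSign S₁ g) with hh|hh
          · exact hh
          · rcases (hsign₁ g).mp hh with h|h
            · exact absurd h hf₂e
            · exact absurd h (Ne.symm hne)
        rw [h1, h2]; simp
  have hmem : f₁ ∈ G.edgeCut (symmDiff S₁ S₂) := by rw [hcut]; simp
  have hX : ¬ ((G.fst f₁ ∈ symmDiff S₁ S₂) ↔ (G.snd f₁ ∈ symmDiff S₁ S₂)) := by
    have := hmem
    simp only [edgeCut, Finset.mem_filter, Finset.mem_univ, true_and] at this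
    exact this
  have hXne : (symmDiff S₁ S₂).Nonempty := by
    by_cases h : G.fst f₁ ∈ symmDiff S₁ S₂
    · exact ⟨_, h⟩
    · refine ⟨G.snd f₁, ?_⟩; tauto
  have hXuniv : symmDiff S₁ S₂ ≠ Finset.univ := by
    intro h
    rw [h] at hX
    simp at hX
  have h3 := h3ec _ hXne hXuniv
  rw [hcut, Finset.card_pair hne] at h3
  omega
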